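/- arXiv:2311.15313 — 3 statements merged into one kernel-verified Lean document; each statement's English description precedes it below -/
import Mathlib

section
/- Let R be an (N+1)×(N+1) Hermitian positive definite matrix and let x, y be complex vectors with unit-modulus entries. If Re(yᴴRx) ≥ xᴴRx and y ≠ x, then yᴴRy > xᴴRx. -/
open Matrix
open scoped ComplexOrder

theorem stmt0 {N : ℕ} (R : Matrix (Fin (N+1)) (Fin (N+1)) ℂ)
    (hR : R.PosDef) (x y : Fin (N+1) → ℂ)
    (hx : ∀ n, ‖x n‖ = 1) (hy : ∀ n, ‖y n‖ = 1)
    (hxy : y ≠ x)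
    (hge : (star x ⬝ᵥ R.mulVec x).re ≤ (star y ⬝ᵥ R.mulVec x).re) :
    (star x ⬝ᵥ R.mulVec x).re < (star y ⬝ᵥ R.mulVec y).re := by
  have h := hR.dotProduct_mulVec_pos (x := y - x) (sub_ne_zero.mpr hxy)
  have hz : 0 < (star (y-x) ⬝ᵥ R *ᵥ (y-x)).re := by
    rw [Complex.lt_def] at h; exact h.1
  have hherm : (star x ⬝ᵥ R *ᵥ y).re = (star y ⬝ᵥ R *ᵥ x).re := by
    have : star (star y ⬝ᵥ R *ᵥ x) = star x ⬝ᵥ R *ᵥ y := by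
      rw [star_dotProduct, star_star, star_mulVec, hR.1.eq,
        dotProduct_mulVec]
    rw [← this, Complex.star_def, Complex.conj_re]
  have hexp : (star (y-x) ⬝ᵥ R *ᵥ (y-x)).re
      = (star y ⬝ᵥ R *ᵥ y).re - 2*(star y ⬝ᵥ R *ᵥ x).re + (star x ⬝ᵥ R *ᵥ x).re := by
    simp only [star_sub, mulVec_sub, sub_dotProduct, dotProduct_sub, Complex.sub_re]
    rw [hherm]; ring
  rw [hexp] at hz
  linarith
end

section
/- Let R be an (N+1)×(N+1) Hermitian positive definite matrix, let x be a unit-modulus vector, and define y by y_n = e^{i·arg((Rx)_n)} for each n. Then Re(yᴴRx) = max over unit-modulus vectors z of Re(zᴴRx), and Re(yᴴRx) ≥ xᴴRx. -/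
open Matrix
open scoped ComplexOrder

theorem stmt1 {N : ℕ} (R : Matrix (Fin (N+1)) (Fin (N+1)) ℂ) (hR : R.PosDef)
    (x : Fin (N+1) → ℂ) (hx : ∀ n, ‖x n‖ = 1)
    (y : Fin (N+1) → ℂ)
    (hy : ∀ n, y n = Complex.exp (Complex.I * (Complex.arg (R.mulVec x n) : ℂ))) :
    IsGreatest {r : ℝ | ∃ z : Fin (N+1) → ℂ, (∀ n, ‖z n‖ = 1) ∧
        r = (star z ⬝ᵥ R.mulVec x).re}
      ((star y ⬝ᵥ R.mulVec x).re) ∧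
    (star x ⬝ᵥ R.mulVec x).re ≤ (star y ⬝ᵥ R.mulVec x).re := by
  set w := R.mulVec x with hw
  have hyn : ∀ n, ‖y n‖ = 1 := by
    intro n
    rw [hy n, mul_comm, Complex.norm_exp_ofReal_mul_I]
  have key : ∀ n, (starRingEnd ℂ) (y n) * w n = ((‖w n‖ : ℝ) : ℂ) := by
    intro n
    conv_lhs => rw [← Complex.norm_mul_exp_arg_mul_I (w n)]
    rw [hy n, mul_comm Complex.I]
    rw [mul_comm ((‖w n‖ : ℝ) : ℂ), ← mul_assoc, ← Complex.normSq_eq_conj_mul_self,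
      ← Complex.sq_norm, Complex.norm_exp_ofReal_mul_I]
    simp
  have hyre : (star y ⬝ᵥ w).re = ∑ n, ‖w n‖ := by
    rw [dotProduct, Complex.re_sum]
    congr 1; ext n
    simp only [Pi.star_apply, ← Complex.star_def] at key ⊢
    rw [key n, Complex.ofReal_re]
  have bound : ∀ z : Fin (N+1) → ℂ, (∀ n, ‖z n‖ = 1) →
      (star z ⬝ᵥ w).re ≤ (star y ⬝ᵥ w).re := by
    intro z hz
    rw [hyre, dotProduct, Complex.re_sum]
    apply Finset.sum_le_sum
    intro n _
    calc ((star z n) * w n).re ≤ ‖(star z n) * w n‖ := Complex.re_le_norm _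
      _ = ‖w n‖ := by
          rw [norm_mul]
          have : ‖star z n‖ = 1 := by
            simp only [Pi.star_apply, norm_star, hz n]
          rw [this, one_mul]
  refine ⟨⟨⟨y, hyn, rfl⟩, ?_⟩, bound x hx⟩
  rintro r ⟨z, hz, rfl⟩
  exact bound z hz
end

section
/- The power iteration sequence x^{(p+1)} = e^{i·angle(R x^{(p)})} applied to a Hermitian positive definite matrix R, starting from any unit-modulus vector x^{(0)} with (Rx^{(p)})_n ≠ 0 for all p, n, produces a sequence whose objective values f(x^{(p)}) = (x^{(p)})ᴴ R x^{(p)} form a monotonically nondecreasing, bounded, and hence convergent real sequence. -/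
open Matrix
open scoped ComplexOrder

-- Hermitian symmetry of the quadratic form
lemma herm_sym {N : ℕ} {R : Matrix (Fin (N+1)) (Fin (N+1)) ℂ} (hR : R.IsHermitian)
    (a b : Fin (N+1) → ℂ) :
    star b ⬝ᵥ R.mulVec a = star (star a ⬝ᵥ R.mulVec b) := by
  rw [star_dotProduct, star_mulVec, hR.eq, ← dotProduct_mulVec]

lemma quad_re_nonneg {N : ℕ} {R : Matrix (Fin (N+1)) (Fin (N+1)) ℂ} (hR : R.PosDef)
    (v : Fin (N+1) → ℂ) : 0 ≤ (star v ⬝ᵥ R.mulVec v).re :=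
  hR.posSemidef.re_dotProduct_nonneg v

theorem stmt5 {N : ℕ} (R : Matrix (Fin (N+1)) (Fin (N+1)) ℂ) (hR : R.PosDef)
    (x : ℕ → Fin (N+1) → ℂ) (h0 : ∀ n, ‖x 0 n‖ = 1)
    (hnz : ∀ p n, R.mulVec (x p) n ≠ 0)
    (hrec : ∀ p n, x (p+1) n =
      Complex.exp (Complex.I * (Complex.arg (R.mulVec (x p) n) : ℂ))) :
    Monotone (fun p => (star (x p) ⬝ᵥ R.mulVec (x p)).re) ∧
    BddAbove (Set.range fun p => (star (x p) ⬝ᵥ R.mulVec (x p)).re) ∧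
    ∃ L : ℝ, Filter.Tendsto (fun p => (star (x p) ⬝ᵥ R.mulVec (x p)).re)
      Filter.atTop (nhds L) := by
  -- all vectors have unit modulus
  have hnorm : ∀ p n, ‖x p n‖ = 1 := by
    intro p
    cases p with
    | zero => exact h0
    | succ q =>
      intro n
      rw [hrec q n, mul_comm, Complex.norm_exp_ofReal_mul_I]
  -- key: re of conj(x (p+1) n) * (Rx)_n = ‖(Rx)_n‖
  have hkey : ∀ p n, (starRingEnd ℂ) (x (p+1) n) * R.mulVec (x p) n
      = (‖R.mulVec (x p) n‖ : ℂ) := by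
    intro p n
    set v := R.mulVec (x p) n with hv
    have habs : (‖v‖ : ℂ) * Complex.exp (v.arg * Complex.I) = v :=
      Complex.norm_mul_exp_arg_mul_I v
    have hz1 : ‖Complex.exp (Complex.I * (v.arg:ℂ))‖ = 1 := by
      rw [mul_comm]; exact Complex.norm_exp_ofReal_mul_I _
    rw [hrec p n]
    calc (starRingEnd ℂ) (Complex.exp (Complex.I * (v.arg:ℂ))) * v
        = (starRingEnd ℂ) (Complex.exp (Complex.I * (v.arg:ℂ)))
            * ((‖v‖:ℂ) * Complex.exp ((v.arg:ℂ) * Complex.I)) := by rw [habs]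
      _ = (‖v‖:ℂ) * (Complex.exp (Complex.I * (v.arg:ℂ))
            * (starRingEnd ℂ) (Complex.exp (Complex.I * (v.arg:ℂ)))) := by
          rw [mul_comm ((v.arg:ℂ)) Complex.I]; ring
      _ = (‖v‖:ℂ)
            * Complex.normSq (Complex.exp (Complex.I * (v.arg:ℂ))) := by
          rw [Complex.mul_conj]
      _ = (‖v‖:ℂ) := by
          rw [Complex.normSq_eq_norm_sq, hz1]; norm_num
      _ = (‖v‖:ℂ) := rfl
  -- cross term lemma: Re (y(p+1)ᴴ R x p) ≥ Re(x pᴴ R x p)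
  have hcross : ∀ p, (star (x p) ⬝ᵥ R.mulVec (x p)).re
      ≤ (star (x (p+1)) ⬝ᵥ R.mulVec (x p)).re := by
    intro p
    simp only [dotProduct, Pi.star_apply, Complex.re_sum]
    apply Finset.sum_le_sum
    intro n _
    have h1 : ((star (x (p+1) n)) * R.mulVec (x p) n).re = ‖R.mulVec (x p) n‖ := by
      rw [show star (x (p+1) n) = (starRingEnd ℂ) (x (p+1) n) from rfl, hkey p n]
      simp
    rw [h1]
    calc ((star (x p n)) * R.mulVec (x p) n).re
        ≤ ‖(star (x p n)) * R.mulVec (x p) n‖ := Complex.re_le_norm _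
      _ = ‖x p n‖ * ‖R.mulVec (x p) n‖ := by rw [norm_mul, norm_star]
      _ = ‖R.mulVec (x p) n‖ := by rw [hnorm p n, one_mul]
  -- monotone
  have hmono : Monotone (fun p => (star (x p) ⬝ᵥ R.mulVec (x p)).re) := by
    apply monotone_nat_of_le_succ
    intro p
    set a := x p
    set b := x (p+1)
    have hpsd := quad_re_nonneg hR (b - a)
    have hexp : star (b - a) ⬝ᵥ R.mulVec (b - a)
        = star b ⬝ᵥ R.mulVec b - star b ⬝ᵥ R.mulVec a
          - star a ⬝ᵥ R.mulVec b + star a ⬝ᵥ R.mulVec a := by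
      rw [star_sub, sub_dotProduct, mulVec_sub, dotProduct_sub, dotProduct_sub]
      ring
    have hsym : (star a ⬝ᵥ R.mulVec b).re = (star b ⬝ᵥ R.mulVec a).re := by
      rw [herm_sym hR.isHermitian b a]
      simp
    have h2 := hcross p
    have hre : 0 ≤ (star b ⬝ᵥ R.mulVec b).re - (star b ⬝ᵥ R.mulVec a).re
        - (star a ⬝ᵥ R.mulVec b).re + (star a ⬝ᵥ R.mulVec a).re := by
      have := hpsd
      rw [hexp] at this
      simpa [Complex.sub_re, Complex.add_re] using this
    rw [hsym] at hre
    linarith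
  -- bounded above
  have hbdd : BddAbove (Set.range fun p => (star (x p) ⬝ᵥ R.mulVec (x p)).re) := by
    refine ⟨∑ n, ∑ m, ‖R n m‖, ?_⟩
    rintro r ⟨p, rfl⟩
    calc (star (x p) ⬝ᵥ R.mulVec (x p)).re
        ≤ ‖star (x p) ⬝ᵥ R.mulVec (x p)‖ := Complex.re_le_norm _
      _ ≤ ∑ n, ‖star (x p n) * R.mulVec (x p) n‖ := by
          simpa [dotProduct] using norm_sum_le Finset.univ
            (fun n => star (x p n) * R.mulVec (x p) n)
      _ ≤ ∑ n, ∑ m, ‖R n m‖ := by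
          apply Finset.sum_le_sum
          intro n _
          rw [norm_mul, norm_star, hnorm p n, one_mul]
          calc ‖R.mulVec (x p) n‖ ≤ ∑ m, ‖R n m * x p m‖ := by
                simpa [Matrix.mulVec, dotProduct] using norm_sum_le Finset.univ
                  (fun m => R n m * x p m)
            _ = ∑ m, ‖R n m‖ := by
                apply Finset.sum_congr rfl
                intro m _
                rw [norm_mul, hnorm p m, mul_one]
  exact ⟨hmono, hbdd, _, tendsto_atTop_ciSup hmono hbdd⟩
end
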